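/- As y → 0⁺, the mean M(y) = Σ_{r=0}^∞ (1 − φ_r(y)) satisfies M(y) = y − (1/4) y² + (1/12) y³ − (7/288) y⁴ + (17/2880) y⁵ − (619/518400) y⁶ + O(y⁷). -/

import Mathlib

open scoped BigOperators

/-- `σ` has an increasing subsequence of length `l`. -/
def hasIncSubseq (k : ℕ) (σ : Equiv.Perm (Fin k)) (l : ℕ) : Prop :=
  ∃ s : Fin l → Fin k, StrictMono s ∧ StrictMono (⇑σ ∘ s)

/-- `f k r`: the number of permutations of `{1,…,k}` all of whose increasing
subsequences have length at most `r`. -/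
noncomputable def f (k r : ℕ) : ℕ :=
  Nat.card {σ : Equiv.Perm (Fin k) // ∀ l, hasIncSubseq k σ l → l ≤ r}

/-- `D r t = Σ_{k≥0} f_{k,r} t^{2k}/(k!)²`. -/
noncomputable def D (r : ℕ) (t : ℝ) : ℝ :=
  ∑' k : ℕ, (f k r : ℝ) * t ^ (2 * k) / ((Nat.factorial k : ℝ)) ^ 2

/-- `F(r;y) = e^{-y} Σ_{k≥r} R_{k,r} y^k/(k!)²` with `R_{k,r} = k! - f_{k,r-1}`. -/
noncomputable def Fdist (r : ℕ) (y : ℝ) : ℝ :=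
  Real.exp (-y) *
    ∑' k : ℕ, (((r + k).factorial : ℝ) - (f (r + k) (r - 1) : ℝ)) * y ^ (r + k)
      / (((r + k).factorial : ℝ)) ^ 2

/-- `b j t = I_j(2t) = Σ_{m≥0} t^{2m+j}/(m!(m+j)!)`. -/
noncomputable def b (j : ℕ) (t : ℝ) : ℝ :=
  ∑' m : ℕ, t ^ (2 * m + j) / ((Nat.factorial m : ℝ) * (Nat.factorial (m + j) : ℝ))

/-- `φ_r(y) = e^{-y} D_r(√y)`. -/
noncomputable def phi (r : ℕ) (y : ℝ) : ℝ := Real.exp (-y) * D r (Real.sqrt y)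

/-- First moment `M(y) = Σ_{r≥0} (1 - φ_r(y))`. -/
noncomputable def M (y : ℝ) : ℝ := ∑' r : ℕ, (1 - phi r y)

/-- Second moment `S(y) = Σ_{r≥0} (2r+1)(1 - φ_r(y))`. -/
noncomputable def S (y : ℝ) : ℝ := ∑' r : ℕ, (2 * (r : ℝ) + 1) * (1 - phi r y)

/-- Variance `V(y) = S(y) - M(y)²`. -/
noncomputable def V (y : ℝ) : ℝ := S y - (M y) ^ 2

-- auxiliary
def myUniv (k : ℕ) : Finset (Equiv.Perm (Fin k)) :=
  ⟨permsOfList (List.finRange k), nodup_permsOfList (List.nodup_finRange k)⟩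

def hasL (k : ℕ) (σ : Equiv.Perm (Fin k)) (m : ℕ) : Prop :=
  ∃ l ∈ (List.finRange k).sublistsLen m, (l.map σ).Pairwise (· < ·)

instance (k m : ℕ) (σ : Equiv.Perm (Fin k)) : Decidable (hasL k σ m) :=
  inferInstanceAs (Decidable (∃ l ∈ (List.finRange k).sublistsLen m, (l.map σ).Pairwise (· < ·)))

def cnt (k m : ℕ) : ℕ := ((myUniv k).filter (fun σ => ¬ hasL k σ m)).card

lemma pairwise_sublist_finRange {k : ℕ} {l : List (Fin k)} (h : l.Pairwise (· < ·)) :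
    l.Sublist (List.finRange k) := by
  apply List.sublist_of_subperm_of_pairwise (r := (· ≤ ·))
  · exact List.subperm_of_subset (h.imp ne_of_lt) (fun x _ => List.mem_finRange x)
  · exact h.imp le_of_lt
  · exact (List.pairwise_lt_finRange k).imp le_of_lt

lemma hasIncSubseq_iff_hasL (k m : ℕ) (σ : Equiv.Perm (Fin k)) :
    hasIncSubseq k σ m ↔ hasL k σ m := by
  constructor
  · rintro ⟨s, hs, hss⟩
    refine ⟨List.ofFn s, List.mem_sublistsLen.2
      ⟨pairwise_sublist_finRange (List.pairwise_ofFn.2 fun i j hij => hs hij),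
        List.length_ofFn⟩, ?_⟩
    rw [List.map_ofFn]
    exact List.pairwise_ofFn.2 fun i j hij => hss hij
  · rintro ⟨l, hl, hp⟩
    obtain ⟨hsub, hlen⟩ := List.mem_sublistsLen.1 hl
    have hpl : l.Pairwise (· < ·) := (List.pairwise_lt_finRange k).sublist hsub
    refine ⟨fun i => l[(i : ℕ)]'(hlen ▸ i.isLt), fun i j hij => ?_, fun i j hij => ?_⟩
    · exact List.pairwise_iff_getElem.1 hpl _ _ _ _ hij
    · have h1 := List.pairwise_iff_getElem.1 hp (i : ℕ) (j : ℕ)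
        (by simpa [List.length_map, hlen] using i.isLt)
        (by simpa [List.length_map, hlen] using j.isLt) hij
      simpa [List.getElem_map] using h1

lemma hasIncSubseq_mono {k : ℕ} {σ : Equiv.Perm (Fin k)} {m l : ℕ} (h : m ≤ l) :
    hasIncSubseq k σ l → hasIncSubseq k σ m := by
  rintro ⟨s, hs, hss⟩
  exact ⟨s ∘ Fin.castLE h, hs.comp (Fin.strictMono_castLE h),
    hss.comp (Fin.strictMono_castLE h)⟩

lemma key_iff (k r : ℕ) (σ : Equiv.Perm (Fin k)) :
    (∀ l, hasIncSubseq k σ l → l ≤ r) ↔ ¬ hasL k σ (r + 1) := by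
  rw [← hasIncSubseq_iff_hasL]
  constructor
  · intro h hh
    have := h _ hh
    omega
  · intro h l hl
    by_contra hlr
    exact h (hasIncSubseq_mono (by omega) hl)

lemma f_eq_cnt (k r : ℕ) : f k r = cnt k (r + 1) := by
  unfold f cnt
  rw [Nat.card_congr (Equiv.subtypeEquivRight (key_iff k r)), Nat.card_eq_fintype_card]
  refine Fintype.card_of_subtype _ (fun σ => ?_)
  simp only [Finset.mem_filter, and_iff_right_iff_imp]
  intro _
  show σ ∈ (myUniv k).1
  exact mem_permsOfList_iff.2 (fun {x} _ => List.mem_finRange x)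

lemma hasIncSubseq_le {k l : ℕ} {σ : Equiv.Perm (Fin k)} (h : hasIncSubseq k σ l) : l ≤ k := by
  obtain ⟨s, hs, -⟩ := h
  simpa using Fintype.card_le_of_injective s hs.injective

lemma f_eq_factorial {k r : ℕ} (h : k ≤ r) : f k r = k.factorial := by
  unfold f
  rw [Nat.card_congr (Equiv.subtypeUnivEquiv (fun σ l hl => (hasIncSubseq_le hl).trans h)),
    Nat.card_eq_fintype_card, Fintype.card_perm, Fintype.card_fin]

lemma f_le_factorial (k r : ℕ) : f k r ≤ k.factorial := by
  unfold f
  have h := Nat.card_le_card_of_injective _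
    (Subtype.val_injective (p := fun σ : Equiv.Perm (Fin k) => ∀ l, hasIncSubseq k σ l → l ≤ r))
  rw [Nat.card_eq_fintype_card (α := Equiv.Perm (Fin k)), Fintype.card_perm, Fintype.card_fin] at h
  exact h
set_option maxRecDepth 1000000 in
set_option maxHeartbeats 4000000 in
lemma fv_1_0 : f 1 0 = 0 := by rw [f_eq_cnt]; decide

set_option maxRecDepth 1000000 in
set_option maxHeartbeats 4000000 in
lemma fv_2_0 : f 2 0 = 0 := by rw [f_eq_cnt]; decide

set_option maxRecDepth 1000000 in
set_option maxHeartbeats 4000000 in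
lemma fv_2_1 : f 2 1 = 1 := by rw [f_eq_cnt]; decide

set_option maxRecDepth 1000000 in
set_option maxHeartbeats 4000000 in
lemma fv_3_0 : f 3 0 = 0 := by rw [f_eq_cnt]; decide

set_option maxRecDepth 1000000 in
set_option maxHeartbeats 4000000 in
lemma fv_3_1 : f 3 1 = 1 := by rw [f_eq_cnt]; decide

set_option maxRecDepth 1000000 in
set_option maxHeartbeats 4000000 in
lemma fv_3_2 : f 3 2 = 5 := by rw [f_eq_cnt]; decide

set_option maxRecDepth 1000000 in
set_option maxHeartbeats 4000000 in
lemma fv_4_0 : f 4 0 = 0 := by rw [f_eq_cnt]; decide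

set_option maxRecDepth 1000000 in
set_option maxHeartbeats 4000000 in
lemma fv_4_1 : f 4 1 = 1 := by rw [f_eq_cnt]; decide

set_option maxRecDepth 1000000 in
set_option maxHeartbeats 4000000 in
lemma fv_4_2 : f 4 2 = 14 := by rw [f_eq_cnt]; decide

set_option maxRecDepth 1000000 in
set_option maxHeartbeats 4000000 in
lemma fv_4_3 : f 4 3 = 23 := by rw [f_eq_cnt]; decide

set_option maxRecDepth 1000000 in
set_option maxHeartbeats 4000000 in
lemma fv_5_0 : f 5 0 = 0 := by rw [f_eq_cnt]; decide

set_option maxRecDepth 1000000 in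
set_option maxHeartbeats 4000000 in
lemma fv_5_1 : f 5 1 = 1 := by rw [f_eq_cnt]; decide

set_option maxRecDepth 1000000 in
set_option maxHeartbeats 4000000 in
lemma fv_5_2 : f 5 2 = 42 := by rw [f_eq_cnt]; decide

set_option maxRecDepth 1000000 in
set_option maxHeartbeats 4000000 in
lemma fv_5_3 : f 5 3 = 103 := by rw [f_eq_cnt]; decide

set_option maxRecDepth 1000000 in
set_option maxHeartbeats 4000000 in
lemma fv_5_4 : f 5 4 = 119 := by rw [f_eq_cnt]; decide

set_option maxRecDepth 1000000 in
set_option maxHeartbeats 4000000 in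
lemma fv_6_0 : f 6 0 = 0 := by rw [f_eq_cnt]; decide

set_option maxRecDepth 1000000 in
set_option maxHeartbeats 4000000 in
lemma fv_6_1 : f 6 1 = 1 := by rw [f_eq_cnt]; decide

set_option maxRecDepth 1000000 in
set_option maxHeartbeats 4000000 in
lemma fv_6_2 : f 6 2 = 132 := by rw [f_eq_cnt]; decide

set_option maxRecDepth 1000000 in
set_option maxHeartbeats 4000000 in
lemma fv_6_3 : f 6 3 = 513 := by rw [f_eq_cnt]; decide

set_option maxRecDepth 1000000 in
set_option maxHeartbeats 4000000 in
lemma fv_6_4 : f 6 4 = 694 := by rw [f_eq_cnt]; decide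

set_option maxRecDepth 1000000 in
set_option maxHeartbeats 4000000 in
lemma fv_6_5 : f 6 5 = 719 := by rw [f_eq_cnt]; decide

noncomputable def gterm (r k : ℕ) (y : ℝ) : ℝ :=
  ((k.factorial : ℝ) - (f k r : ℝ)) * y ^ k / (k.factorial : ℝ) ^ 2

noncomputable def gg (r : ℕ) (y : ℝ) : ℝ := ∑' k : ℕ, gterm r k y

lemma fact_pos' (k : ℕ) : (0:ℝ) < (k.factorial : ℝ) := Nat.cast_pos.2 k.factorial_pos

lemma gterm_nonneg (r k : ℕ) {y : ℝ} (hy : 0 ≤ y) : 0 ≤ gterm r k y := by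
  unfold gterm
  have h1 : (0:ℝ) ≤ (k.factorial : ℝ) - (f k r : ℝ) :=
    sub_nonneg.2 (Nat.cast_le.2 (f_le_factorial k r))
  positivity

lemma gterm_le (r k : ℕ) {y : ℝ} (hy : 0 ≤ y) : gterm r k y ≤ y ^ k := by
  unfold gterm
  have hf := fact_pos' k
  have h1 : (k.factorial : ℝ) - (f k r : ℝ) ≤ (k.factorial : ℝ) :=
    sub_le_self _ (Nat.cast_nonneg _)
  calc ((k.factorial : ℝ) - (f k r : ℝ)) * y ^ k / (k.factorial : ℝ) ^ 2
      ≤ (k.factorial : ℝ) * y ^ k / (k.factorial : ℝ) ^ 2 := by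
        gcongr
    _ = y ^ k / (k.factorial : ℝ) := by field_simp
    _ ≤ y ^ k / 1 := by
        gcongr
        exact_mod_cast k.factorial_pos
    _ = y ^ k := div_one _

lemma summable_gterm (r : ℕ) {y : ℝ} (hy : 0 ≤ y) (hy1 : y < 1) :
    Summable (fun k => gterm r k y) :=
  Summable.of_nonneg_of_le (fun k => gterm_nonneg r k hy) (fun k => gterm_le r k hy)
    (summable_geometric_of_lt_one hy hy1)

lemma one_sub_phi {y : ℝ} (hy : 0 ≤ y) (hy1 : y < 1) (r : ℕ) :
    1 - phi r y = Real.exp (-y) * gg r y := by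
  have hD : D r (Real.sqrt y) = ∑' k : ℕ, (f k r : ℝ) * y ^ k / (k.factorial : ℝ) ^ 2 := by
    unfold D
    exact tsum_congr fun k => by rw [pow_mul, Real.sq_sqrt hy]
  have s3 : Summable (fun k : ℕ => y ^ k / (k.factorial : ℝ)) :=
    Real.summable_pow_div_factorial y
  have s2 : Summable (fun k : ℕ => (f k r : ℝ) * y ^ k / (k.factorial : ℝ) ^ 2) := by
    refine Summable.of_nonneg_of_le (fun k => by positivity) (fun k => ?_) s3
    have hf := fact_pos' k
    calc (f k r : ℝ) * y ^ k / (k.factorial : ℝ) ^ 2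
        ≤ (k.factorial : ℝ) * y ^ k / (k.factorial : ℝ) ^ 2 := by
          have hfle : (f k r : ℝ) ≤ (k.factorial : ℝ) := Nat.cast_le.2 (f_le_factorial k r)
          have hyk : (0:ℝ) ≤ y ^ k := pow_nonneg hy k
          gcongr
      _ = y ^ k / (k.factorial : ℝ) := by field_simp
  have hexp : Real.exp y = ∑' k : ℕ, y ^ k / (k.factorial : ℝ) := by
    rw [Real.exp_eq_exp_ℝ, NormedSpace.exp_eq_tsum_div]
  have hgg : gg r y = Real.exp y - D r (Real.sqrt y) := by
    rw [hD, hexp, ← Summable.tsum_sub s3 s2]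
    refine tsum_congr fun k => ?_
    have hf := (fact_pos' k).ne'
    unfold gterm
    field_simp
  unfold phi
  rw [hgg, mul_sub, ← Real.exp_add, neg_add_cancel, Real.exp_zero]

set_option maxHeartbeats 1000000 in
lemma gg_partial_bound (r n : ℕ) {y : ℝ} (hy : 0 < y) (hy2 : y ≤ 1/2) :
    |gg r y - ∑ k ∈ Finset.range n, gterm r k y| ≤ 2 * y ^ n := by
  have hy1 : y < 1 := by linarith
  have hs := summable_gterm r hy.le hy1
  have hkey := Summable.sum_add_tsum_nat_add n hs
  have htail : gg r y - ∑ k ∈ Finset.range n, gterm r k y = ∑' k : ℕ, gterm r (k + n) y := by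
    unfold gg
    linarith [hkey]
  have hinv : (1 - y)⁻¹ ≤ 2 := by
    calc (1 - y)⁻¹ ≤ (2⁻¹ : ℝ)⁻¹ := inv_anti₀ (by norm_num) (by linarith)
      _ = 2 := by norm_num
  rw [htail, abs_of_nonneg (tsum_nonneg fun k => gterm_nonneg r (k + n) hy.le)]
  have hsum2 : Summable (fun k : ℕ => y ^ n * y ^ k) :=
    (summable_geometric_of_lt_one hy.le hy1).mul_left _
  calc (∑' k : ℕ, gterm r (k + n) y) ≤ ∑' k : ℕ, y ^ n * y ^ k := by
        refine Summable.tsum_le_tsum (fun k => ?_) ((summable_nat_add_iff n).2 hs) hsum2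
        calc gterm r (k + n) y ≤ y ^ (k + n) := gterm_le r (k + n) hy.le
          _ = y ^ n * y ^ k := by rw [pow_add]; ring
    _ = y ^ n * (1 - y)⁻¹ := by rw [tsum_mul_left, tsum_geometric_of_lt_one hy.le hy1]
    _ ≤ y ^ n * 2 := mul_le_mul_of_nonneg_left hinv (pow_nonneg hy.le n)
    _ = 2 * y ^ n := mul_comm _ _

lemma one_sub_phi_bounds {y : ℝ} (hy : 0 < y) (hy2 : y ≤ 1/2) (r : ℕ) :
    0 ≤ 1 - phi r y ∧ 1 - phi r y ≤ 2 * y ^ (r + 1) := by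
  have hy1 : y < 1 := by linarith
  have hggnn : 0 ≤ gg r y := tsum_nonneg fun k => gterm_nonneg r k hy.le
  rw [one_sub_phi hy.le hy1]
  constructor
  · exact mul_nonneg (Real.exp_pos _).le hggnn
  · have h1 := gg_partial_bound r (r + 1) hy hy2
    have h0 : ∑ k ∈ Finset.range (r + 1), gterm r k y = 0 := by
      refine Finset.sum_eq_zero fun k hk => ?_
      have hk' : k ≤ r := by
        have := Finset.mem_range.1 hk
        omega
      unfold gterm
      rw [f_eq_factorial hk', sub_self, zero_mul, zero_div]
    rw [h0, sub_zero] at h1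
    calc Real.exp (-y) * gg r y ≤ 1 * gg r y :=
          mul_le_mul_of_nonneg_right (Real.exp_le_one_iff.2 (by linarith)) hggnn
      _ = gg r y := one_mul _
      _ ≤ 2 * y ^ (r + 1) := (abs_le.1 h1).2
lemma fv_0_0 : f 0 0 = 1 := by rw [f_eq_factorial (by norm_num)]; rfl
lemma fv_0_1 : f 0 1 = 1 := by rw [f_eq_factorial (by norm_num)]; rfl
lemma fv_1_1 : f 1 1 = 1 := by rw [f_eq_factorial (by norm_num)]; rfl
lemma fv_0_2 : f 0 2 = 1 := by rw [f_eq_factorial (by norm_num)]; rfl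
lemma fv_1_2 : f 1 2 = 1 := by rw [f_eq_factorial (by norm_num)]; rfl
lemma fv_2_2 : f 2 2 = 2 := by rw [f_eq_factorial (by norm_num)]; rfl
lemma fv_0_3 : f 0 3 = 1 := by rw [f_eq_factorial (by norm_num)]; rfl
lemma fv_1_3 : f 1 3 = 1 := by rw [f_eq_factorial (by norm_num)]; rfl
lemma fv_2_3 : f 2 3 = 2 := by rw [f_eq_factorial (by norm_num)]; rfl
lemma fv_3_3 : f 3 3 = 6 := by rw [f_eq_factorial (by norm_num)]; rfl
lemma fv_0_4 : f 0 4 = 1 := by rw [f_eq_factorial (by norm_num)]; rfl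
lemma fv_1_4 : f 1 4 = 1 := by rw [f_eq_factorial (by norm_num)]; rfl
lemma fv_2_4 : f 2 4 = 2 := by rw [f_eq_factorial (by norm_num)]; rfl
lemma fv_3_4 : f 3 4 = 6 := by rw [f_eq_factorial (by norm_num)]; rfl
lemma fv_4_4 : f 4 4 = 24 := by rw [f_eq_factorial (by norm_num)]; rfl
lemma fv_0_5 : f 0 5 = 1 := by rw [f_eq_factorial (by norm_num)]; rfl
lemma fv_1_5 : f 1 5 = 1 := by rw [f_eq_factorial (by norm_num)]; rfl
lemma fv_2_5 : f 2 5 = 2 := by rw [f_eq_factorial (by norm_num)]; rfl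
lemma fv_3_5 : f 3 5 = 6 := by rw [f_eq_factorial (by norm_num)]; rfl
lemma fv_4_5 : f 4 5 = 24 := by rw [f_eq_factorial (by norm_num)]; rfl
lemma fv_5_5 : f 5 5 = 120 := by rw [f_eq_factorial (by norm_num)]; rfl

lemma poly0 (y : ℝ) : ∑ k ∈ Finset.range 7, gterm 0 k y = y + y^2/2 + y^3/6 + y^4/24 + y^5/120 + y^6/720 := by
  simp [Finset.sum_range_succ, gterm, fv_0_0, fv_1_0, fv_2_0, fv_3_0, fv_4_0, fv_5_0, fv_6_0, Nat.factorial]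
  ring

lemma poly1 (y : ℝ) : ∑ k ∈ Finset.range 7, gterm 1 k y = y^2/4 + 5*y^3/36 + 23*y^4/576 + 119*y^5/14400 + 719*y^6/518400 := by
  simp [Finset.sum_range_succ, gterm, fv_0_1, fv_1_1, fv_2_1, fv_3_1, fv_4_1, fv_5_1, fv_6_1, Nat.factorial]
  ring

lemma poly2 (y : ℝ) : ∑ k ∈ Finset.range 7, gterm 2 k y = y^3/36 + 10*y^4/576 + 78*y^5/14400 + 588*y^6/518400 := by
  simp [Finset.sum_range_succ, gterm, fv_0_2, fv_1_2, fv_2_2, fv_3_2, fv_4_2, fv_5_2, fv_6_2, Nat.factorial]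
  ring

lemma poly3 (y : ℝ) : ∑ k ∈ Finset.range 7, gterm 3 k y = y^4/576 + 17*y^5/14400 + 207*y^6/518400 := by
  simp [Finset.sum_range_succ, gterm, fv_0_3, fv_1_3, fv_2_3, fv_3_3, fv_4_3, fv_5_3, fv_6_3, Nat.factorial]
  ring

lemma poly4 (y : ℝ) : ∑ k ∈ Finset.range 7, gterm 4 k y = y^5/14400 + 26*y^6/518400 := by
  simp [Finset.sum_range_succ, gterm, fv_0_4, fv_1_4, fv_2_4, fv_3_4, fv_4_4, fv_5_4, fv_6_4, Nat.factorial]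
  ring

lemma poly5 (y : ℝ) : ∑ k ∈ Finset.range 7, gterm 5 k y = y^6/518400 := by
  simp [Finset.sum_range_succ, gterm, fv_0_5, fv_1_5, fv_2_5, fv_3_5, fv_4_5, fv_5_5, fv_6_5, Nat.factorial]
  ring

lemma expand_helper (r : ℕ) (p : ℝ) {y : ℝ} (hy : 0 < y) (hy2 : y ≤ 1/2)
    (hp : ∑ k ∈ Finset.range 7, gterm r k y = p) :
    |(1 - phi r y) - Real.exp (-y) * p| ≤ 2 * y ^ 7 := by
  rw [one_sub_phi hy.le (by linarith) r, ← mul_sub, abs_mul,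
    abs_of_nonneg (Real.exp_pos _).le]
  have h := gg_partial_bound r 7 hy hy2
  rw [hp] at h
  calc Real.exp (-y) * |gg r y - p| ≤ 1 * (2 * y ^ 7) :=
        mul_le_mul (Real.exp_le_one_iff.2 (by linarith)) h (abs_nonneg _) zero_le_one
    _ = 2 * y ^ 7 := one_mul _


set_option maxHeartbeats 1000000 in
theorem stmt12 :
    ∃ C > (0 : ℝ), ∃ y₀ > (0 : ℝ), ∀ y : ℝ, 0 < y → y < y₀ →
      |M y - (y - (1 / 4) * y ^ 2 + (1 / 12) * y ^ 3 - (7 / 288) * y ^ 4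
        + (17 / 2880) * y ^ 5 - (619 / 518400) * y ^ 6)| ≤ C * y ^ 7 := by
  refine ⟨20, by norm_num, 1/2, by norm_num, fun y hy hy2 => ?_⟩
  have hy2' : y ≤ 1/2 := hy2.le
  have hy1 : y < 1 := by linarith
  have hb : ∀ r, 0 ≤ 1 - phi r y ∧ 1 - phi r y ≤ 2 * y ^ (r + 1) :=
    one_sub_phi_bounds hy hy2'
  have hsummable : Summable (fun r => 1 - phi r y) := by
    refine Summable.of_nonneg_of_le (fun r => (hb r).1) (fun r => (hb r).2) ?_
    exact ((summable_geometric_of_lt_one hy.le hy1).mul_left (2*y)).congr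
      (fun r => by ring)
  have hMsplit := Summable.sum_add_tsum_nat_add 6 hsummable
  have hinv : (1 - y)⁻¹ ≤ 2 := by
    calc (1 - y)⁻¹ ≤ (2⁻¹ : ℝ)⁻¹ := inv_anti₀ (by norm_num) (by linarith)
      _ = 2 := by norm_num
  have htail_nn : 0 ≤ ∑' r, (1 - phi (r + 6) y) := tsum_nonneg fun r => (hb _).1
  have htail_le : ∑' r, (1 - phi (r + 6) y) ≤ 4 * y ^ 7 := by
    have hs6 : Summable (fun r => 1 - phi (r + 6) y) := (summable_nat_add_iff 6).2 hsummable
    have hgeo : Summable (fun r : ℕ => (2 * y ^ 7) * y ^ r) :=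
      (summable_geometric_of_lt_one hy.le hy1).mul_left _
    calc ∑' r, (1 - phi (r + 6) y) ≤ ∑' r : ℕ, (2 * y ^ 7) * y ^ r := by
          refine Summable.tsum_le_tsum (fun r => ?_) hs6 hgeo
          calc 1 - phi (r + 6) y ≤ 2 * y ^ (r + 6 + 1) := (hb (r + 6)).2
            _ = (2 * y ^ 7) * y ^ r := by ring
      _ = (2 * y ^ 7) * (1 - y)⁻¹ := by
          rw [tsum_mul_left, tsum_geometric_of_lt_one hy.le hy1]
      _ ≤ (2 * y ^ 7) * 2 := mul_le_mul_of_nonneg_left hinv (by positivity)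
      _ = 4 * y ^ 7 := by ring
  have e0 := expand_helper 0 _ hy hy2' (poly0 y)
  have e1 := expand_helper 1 _ hy hy2' (poly1 y)
  have e2 := expand_helper 2 _ hy hy2' (poly2 y)
  have e3 := expand_helper 3 _ hy hy2' (poly3 y)
  have e4 := expand_helper 4 _ hy hy2' (poly4 y)
  have e5 := expand_helper 5 _ hy hy2' (poly5 y)
  have hsum6 : ∑ r ∈ Finset.range 6, (1 - phi r y) =
      (1 - phi 0 y) + (1 - phi 1 y) + (1 - phi 2 y) + (1 - phi 3 y) + (1 - phi 4 y)
        + (1 - phi 5 y) := by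
    simp [Finset.sum_range_succ]
    ring
  have hEb : |Real.exp (-y) - (1 - y + y^2/2 - y^3/6 + y^4/24 - y^5/120 + y^6/720)| ≤ y ^ 7 := by
    have h := Real.exp_bound (x := -y) (by rw [abs_neg, abs_of_pos hy]; linarith)
      (n := 7) (by norm_num)
    have hsum : ∑ i ∈ Finset.range 7, (-y) ^ i / (i.factorial : ℝ) = (1 - y + y^2/2 - y^3/6 + y^4/24 - y^5/120 + y^6/720) := by
      simp [Finset.sum_range_succ, Nat.factorial]
      ring
    rw [hsum, abs_neg, abs_of_pos hy] at h
    calc |Real.exp (-y) - (1 - y + y^2/2 - y^3/6 + y^4/24 - y^5/120 + y^6/720)| ≤ y ^ 7 * (↑(Nat.succ 7) / ((Nat.factorial 7 : ℝ) * 7)) := h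
      _ ≤ y ^ 7 * 1 := by
          apply mul_le_mul_of_nonneg_left _ (by positivity)
          norm_num [Nat.factorial]
      _ = y ^ 7 := mul_one _
  have hy2n : (0:ℝ) ≤ y^2 := by positivity
  have hy3n : (0:ℝ) ≤ y^3 := by positivity
  have hy4n : (0:ℝ) ≤ y^4 := by positivity
  have hy5n : (0:ℝ) ≤ y^5 := by positivity
  have hy6n : (0:ℝ) ≤ y^6 := by positivity
  have hy2p : y^2 ≤ 1 := pow_le_one₀ hy.le hy1.le
  have hy3p : y^3 ≤ 1 := pow_le_one₀ hy.le hy1.le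
  have hy4p : y^4 ≤ 1 := pow_le_one₀ hy.le hy1.le
  have hy5p : y^5 ≤ 1 := pow_le_one₀ hy.le hy1.le
  have hy6p : y^6 ≤ 1 := pow_le_one₀ hy.le hy1.le
  have hPnn : (0:ℝ) ≤ (y + (3/4)*y^2 + (1/3)*y^3 + (29/288)*y^4 + (67/2880)*y^5 + (2261/518400)*y^6) := by positivity
  have hP2 : (y + (3/4)*y^2 + (1/3)*y^3 + (29/288)*y^4 + (67/2880)*y^5 + (2261/518400)*y^6) ≤ 2 := by linarith
  have hEP : |(Real.exp (-y) - (1 - y + y^2/2 - y^3/6 + y^4/24 - y^5/120 + y^6/720)) * (y + (3/4)*y^2 + (1/3)*y^3 + (29/288)*y^4 + (67/2880)*y^5 + (2261/518400)*y^6)| ≤ y ^ 7 * 2 := by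
    rw [abs_mul, abs_of_nonneg hPnn]
    exact mul_le_mul hEb hP2 hPnn (by positivity)
  have hRb : |(-251/518400 + (791/1036800)*y + (-13/97200)*y^2 + (1589/12441600)*y^3 + (-251/62208000)*y^4 + (2261/373248000)*y^5)| ≤ 1 := by
    rw [abs_le]
    constructor <;> linarith
  have hyR : |y ^ 7 * (-251/518400 + (791/1036800)*y + (-13/97200)*y^2 + (1589/12441600)*y^3 + (-251/62208000)*y^4 + (2261/373248000)*y^5)| ≤ y ^ 7 := by
    rw [abs_mul, abs_of_nonneg (by positivity : (0:ℝ) ≤ y ^ 7)]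
    calc y ^ 7 * |(-251/518400 + (791/1036800)*y + (-13/97200)*y^2 + (1589/12441600)*y^3 + (-251/62208000)*y^4 + (2261/373248000)*y^5)| ≤ y ^ 7 * 1 := mul_le_mul_of_nonneg_left hRb (by positivity)
      _ = y ^ 7 := mul_one _
  obtain ⟨l0, u0⟩ := abs_le.1 e0
  obtain ⟨l1, u1⟩ := abs_le.1 e1
  obtain ⟨l2, u2⟩ := abs_le.1 e2
  obtain ⟨l3, u3⟩ := abs_le.1 e3
  obtain ⟨l4, u4⟩ := abs_le.1 e4
  obtain ⟨l5, u5⟩ := abs_le.1 e5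
  obtain ⟨lE, uE⟩ := abs_le.1 hEP
  obtain ⟨lR, uR⟩ := abs_le.1 hyR
  have hMeq : M y = ∑ r ∈ Finset.range 6, (1 - phi r y) + ∑' r, (1 - phi (r + 6) y) :=
    hMsplit.symm
  have hid : M y - (y - (1 / 4) * y ^ 2 + (1 / 12) * y ^ 3 - (7 / 288) * y ^ 4 + (17 / 2880) * y ^ 5 - (619 / 518400) * y ^ 6) =
      (((1 - phi 0 y) - Real.exp (-y) * (y + y^2/2 + y^3/6 + y^4/24 + y^5/120 + y^6/720))
      + ((1 - phi 1 y) - Real.exp (-y) * (y^2/4 + 5*y^3/36 + 23*y^4/576 + 119*y^5/14400 + 719*y^6/518400))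
      + ((1 - phi 2 y) - Real.exp (-y) * (y^3/36 + 10*y^4/576 + 78*y^5/14400 + 588*y^6/518400))
      + ((1 - phi 3 y) - Real.exp (-y) * (y^4/576 + 17*y^5/14400 + 207*y^6/518400))
      + ((1 - phi 4 y) - Real.exp (-y) * (y^5/14400 + 26*y^6/518400))
      + ((1 - phi 5 y) - Real.exp (-y) * (y^6/518400)))
      + (∑' r, (1 - phi (r + 6) y)) + (Real.exp (-y) - (1 - y + y^2/2 - y^3/6 + y^4/24 - y^5/120 + y^6/720)) * (y + (3/4)*y^2 + (1/3)*y^3 + (29/288)*y^4 + (67/2880)*y^5 + (2261/518400)*y^6) + y ^ 7 * (-251/518400 + (791/1036800)*y + (-13/97200)*y^2 + (1589/12441600)*y^3 + (-251/62208000)*y^4 + (2261/373248000)*y^5) := by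
    rw [hMeq, hsum6]
    ring
  rw [abs_le]
  constructor <;> linarith [hid]
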